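/- Let x, y, z be distinct points in ℝⁿ, let l(x,y,z) = |x−y| + |x−z| + |y−z| and τ(x,y,z) = π − max{∠zxy, ∠zyx}. Then with g_z(x) = (x−z)/|x−z|, we have (2|x−y|/(π·l(x,y,z)))·τ(x,y,z) ≤ |g_z(x) − g_z(y)| ≤ (4|x−y|/l(x,y,z))·τ(x,y,z). -/

import Mathlib

open Real InnerProductGeometry RealInnerProductSpace

section helpers

lemma trigL (m g : ℝ) (hm : 0 ≤ m) (hg : 0 ≤ g) (h : 2*m + g ≤ π) :
    (m + g) * Real.sin g ≤ π * Real.sin (g/2) * (Real.sin m + Real.sin (m+g) + Real.sin g) := by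
  have hgpi : g ≤ π := by linarith
  have hs : 0 ≤ Real.sin (g/2) := Real.sin_nonneg_of_nonneg_of_le_pi (by linarith) (by linarith [Real.pi_pos])
  have hc : 0 ≤ Real.cos (g/2) := Real.cos_nonneg_of_mem_Icc ⟨by linarith [Real.pi_pos], by linarith⟩
  have hsing : Real.sin g = 2 * Real.sin (g/2) * Real.cos (g/2) := by
    rw [← Real.sin_two_mul]; ring_nf
  have e2 : Real.sin m + Real.sin (m+g) = 2 * Real.sin (m + g/2) * Real.cos (g/2) := by
    have h1 : m = (m + g/2) - g/2 := by ring
    have h2 : m + g = (m + g/2) + g/2 := by ring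
    rw [h2, Real.sin_add]; nth_rewrite 1 [h1]; rw [Real.sin_sub]; ring
  have hk : m + g ≤ π * Real.sin (m + g/2) := by
    have := Real.mul_le_sin (x := m + g/2) (by linarith) (by linarith)
    have hπ := Real.pi_pos
    have h2 := mul_le_mul_of_nonneg_left this hπ.le
    rw [show π * (2 / π * (m + g / 2)) = 2 * (m + g/2) by field_simp] at h2
    linarith
  have hsg : 0 ≤ Real.sin g := Real.sin_nonneg_of_nonneg_of_le_pi hg hgpi
  have key : (m + g) * Real.sin g ≤ (π * Real.sin (m + g/2)) * Real.sin g :=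
    mul_le_mul_of_nonneg_right hk hsg
  calc (m + g) * Real.sin g ≤ (π * Real.sin (m + g/2)) * Real.sin g := key
    _ = π * Real.sin (g/2) * (Real.sin m + Real.sin (m+g)) := by rw [e2, hsing]; ring
    _ ≤ π * Real.sin (g/2) * (Real.sin m + Real.sin (m+g) + Real.sin g) := by
        nlinarith [mul_nonneg (mul_nonneg Real.pi_pos.le hs) hsg]

lemma trigU (m g : ℝ) (hm : 0 ≤ m) (hg : 0 ≤ g) (h : 2*m + g ≤ π) :
    Real.sin (g/2) * (Real.sin m + Real.sin (m+g) + Real.sin g) ≤ 2 * Real.sin g * (m + g) := by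
  have hs : 0 ≤ Real.sin (g/2) := Real.sin_nonneg_of_nonneg_of_le_pi (by linarith) (by linarith [Real.pi_pos])
  have hc : 0 ≤ Real.cos (g/2) := Real.cos_nonneg_of_mem_Icc ⟨by linarith [Real.pi_pos], by linarith⟩
  have hsing : Real.sin g = 2 * Real.sin (g/2) * Real.cos (g/2) := by
    rw [← Real.sin_two_mul]; ring_nf
  have e2 : Real.sin m + Real.sin (m+g) = 2 * Real.sin (m + g/2) * Real.cos (g/2) := by
    have h1 : m = (m + g/2) - g/2 := by ring
    have h2 : m + g = (m + g/2) + g/2 := by ring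
    rw [h2, Real.sin_add]; nth_rewrite 1 [h1]; rw [Real.sin_sub]; ring
  have h1 : Real.sin (m + g/2) ≤ m + g/2 := Real.sin_le (by linarith)
  have h2 : Real.sin (g/2) ≤ g/2 := Real.sin_le (by linarith)
  have hkey : Real.sin (m + g/2) + Real.sin (g/2) ≤ 2 * (m + g) := by linarith
  have hsc : 0 ≤ Real.sin (g/2) * Real.cos (g/2) := mul_nonneg hs hc
  calc Real.sin (g/2) * (Real.sin m + Real.sin (m+g) + Real.sin g)
      = 2 * (Real.sin (g/2) * Real.cos (g/2)) * (Real.sin (m + g/2) + Real.sin (g/2)) := by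
        rw [e2, hsing]; ring
    _ ≤ 2 * (Real.sin (g/2) * Real.cos (g/2)) * (2 * (m + g)) := by nlinarith
    _ = 2 * Real.sin g * (m + g) := by rw [hsing]; ring

variable {E : Type*} [NormedAddCommGroup E] [InnerProductSpace ℝ E]

lemma lawsin (p q : E) :
    Real.sin (angle (-p) (q - p)) * (‖p‖ * ‖q - p‖) =
      Real.sin (angle p q) * (‖p‖ * ‖q‖) := by
  have h1 := sin_angle_mul_norm_mul_norm (-p) (q - p)
  have h2 := sin_angle_mul_norm_mul_norm p q
  rw [norm_neg] at h1
  rw [h1, h2]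
  congr 1
  simp only [inner_sub_left, inner_sub_right, inner_neg_left, inner_neg_right,
    real_inner_comm p q]
  ring

lemma unitdiff {p q : E} (hp : p ≠ 0) (hq : q ≠ 0) :
    ‖(‖p‖⁻¹ • p) - (‖q‖⁻¹ • q)‖ = 2 * Real.sin (angle p q / 2) := by
  have hpn : 0 < ‖p‖ := norm_pos_iff.mpr hp
  have hqn : 0 < ‖q‖ := norm_pos_iff.mpr hq
  have hup : ‖(‖p‖⁻¹ • p)‖ = 1 := by
    rw [norm_smul, norm_inv, norm_norm, inv_mul_cancel₀ hpn.ne']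
  have huq : ‖(‖q‖⁻¹ • q)‖ = 1 := by
    rw [norm_smul, norm_inv, norm_norm, inv_mul_cancel₀ hqn.ne']
  have hinner : ⟪(‖p‖⁻¹ • p), (‖q‖⁻¹ • q)⟫ = Real.cos (angle p q) := by
    rw [real_inner_smul_left, real_inner_smul_right, cos_angle]
    field_simp
  have hsq : ‖(‖p‖⁻¹ • p) - (‖q‖⁻¹ • q)‖ ^ 2 = (2 * Real.sin (angle p q / 2)) ^ 2 := by
    rw [norm_sub_sq_real, hup, huq, hinner]
    have hcos : Real.cos (angle p q) = 1 - 2 * Real.sin (angle p q / 2) ^ 2 := by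
      have := Real.cos_two_mul (angle p q / 2)
      have h2 : 2 * (angle p q / 2) = angle p q := by ring
      rw [h2] at this
      have hpc := Real.sin_sq_add_cos_sq (angle p q / 2)
      nlinarith
    rw [hcos]; ring
  have hge : 0 ≤ 2 * Real.sin (angle p q / 2) := by
    have := angle_nonneg p q
    have := angle_le_pi p q
    have : 0 ≤ Real.sin (angle p q / 2) :=
      Real.sin_nonneg_of_nonneg_of_le_pi (by linarith) (by linarith [Real.pi_pos])
    linarith
  nlinarith [norm_nonneg ((‖p‖⁻¹ • p) - (‖q‖⁻¹ • q)),
    sq_nonneg (‖(‖p‖⁻¹ • p) - (‖q‖⁻¹ • q)‖ - 2 * Real.sin (angle p q / 2))]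

lemma core (A B G c a b : ℝ) (hA0 : 0 ≤ A) (hB0 : 0 ≤ B)
    (hG0 : 0 ≤ G) (hsum : A + B + G = π) (hc : 0 < c)
    (hsa : Real.sin A * c = Real.sin G * a) (hsb : Real.sin B * c = Real.sin G * b)
    (hsG : 0 < Real.sin G) :
    c * (π - max A B) ≤ π * Real.sin (G/2) * (c + b + a) ∧
      Real.sin (G/2) * (c + b + a) ≤ 2 * c * (π - max A B) := by
  have hS : c * (Real.sin A + Real.sin B + Real.sin G) = Real.sin G * (c + b + a) := by
    nlinarith [hsa, hsb]
  rcases le_total A B with hAB | hAB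
  · have hmax : max A B = B := max_eq_right hAB
    have hτ : π - B = A + G := by linarith
    have h2AG : 2*A + G ≤ π := by linarith
    have hBsin : Real.sin B = Real.sin (A + G) := by
      rw [show B = π - (A + G) by linarith, Real.sin_pi_sub]
    have hL := trigL A G hA0 hG0 h2AG
    have hU := trigU A G hA0 hG0 h2AG
    rw [hmax, hτ]
    constructor
    · have h1 : c * (A + G) * Real.sin G ≤ π * Real.sin (G/2) * (c + b + a) * Real.sin G := by
        calc c * (A + G) * Real.sin G = c * ((A + G) * Real.sin G) := by ring
          _ ≤ c * (π * Real.sin (G/2) * (Real.sin A + Real.sin (A+G) + Real.sin G)) :=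
              mul_le_mul_of_nonneg_left hL hc.le
          _ = π * Real.sin (G/2) * (c * (Real.sin A + Real.sin B + Real.sin G)) := by
              rw [← hBsin]; ring
          _ = π * Real.sin (G/2) * (Real.sin G * (c + b + a)) := by rw [hS]
          _ = π * Real.sin (G/2) * (c + b + a) * Real.sin G := by ring
      exact le_of_mul_le_mul_right h1 hsG
    · have h2 : Real.sin (G/2) * (c + b + a) * Real.sin G ≤ 2 * c * (A + G) * Real.sin G := by
        calc Real.sin (G/2) * (c + b + a) * Real.sin G
            = Real.sin (G/2) * (Real.sin G * (c + b + a)) := by ring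
          _ = Real.sin (G/2) * (c * (Real.sin A + Real.sin B + Real.sin G)) := by rw [hS]
          _ = c * (Real.sin (G/2) * (Real.sin A + Real.sin (A+G) + Real.sin G)) := by
              rw [← hBsin]; ring
          _ ≤ c * (2 * Real.sin G * (A + G)) := mul_le_mul_of_nonneg_left hU hc.le
          _ = 2 * c * (A + G) * Real.sin G := by ring
      exact le_of_mul_le_mul_right h2 hsG
  · have hmax : max A B = A := max_eq_left hAB
    have hτ : π - A = B + G := by linarith
    have h2BG : 2*B + G ≤ π := by linarith
    have hAsin : Real.sin A = Real.sin (B + G) := by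
      rw [show A = π - (B + G) by linarith, Real.sin_pi_sub]
    have hL := trigL B G hB0 hG0 h2BG
    have hU := trigU B G hB0 hG0 h2BG
    rw [hmax, hτ]
    constructor
    · have h1 : c * (B + G) * Real.sin G ≤ π * Real.sin (G/2) * (c + b + a) * Real.sin G := by
        calc c * (B + G) * Real.sin G = c * ((B + G) * Real.sin G) := by ring
          _ ≤ c * (π * Real.sin (G/2) * (Real.sin B + Real.sin (B+G) + Real.sin G)) :=
              mul_le_mul_of_nonneg_left hL hc.le
          _ = π * Real.sin (G/2) * (c * (Real.sin A + Real.sin B + Real.sin G)) := by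
              rw [← hAsin]; ring
          _ = π * Real.sin (G/2) * (Real.sin G * (c + b + a)) := by rw [hS]
          _ = π * Real.sin (G/2) * (c + b + a) * Real.sin G := by ring
      exact le_of_mul_le_mul_right h1 hsG
    · have h2 : Real.sin (G/2) * (c + b + a) * Real.sin G ≤ 2 * c * (B + G) * Real.sin G := by
        calc Real.sin (G/2) * (c + b + a) * Real.sin G
            = Real.sin (G/2) * (Real.sin G * (c + b + a)) := by ring
          _ = Real.sin (G/2) * (c * (Real.sin A + Real.sin B + Real.sin G)) := by rw [hS]
          _ = c * (Real.sin (G/2) * (Real.sin B + Real.sin (B+G) + Real.sin G)) := by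
              rw [← hAsin]; ring
          _ ≤ c * (2 * Real.sin G * (B + G)) := mul_le_mul_of_nonneg_left hU hc.le
          _ = 2 * c * (B + G) * Real.sin G := by ring
      exact le_of_mul_le_mul_right h2 hsG

end helpers

open EuclideanGeometry

theorem stmt2 (n : ℕ) (x y z : EuclideanSpace ℝ (Fin n))
    (hxy : x ≠ y) (hxz : x ≠ z) (hyz : y ≠ z) :
    2 * ‖x - y‖ / (Real.pi * (‖x - y‖ + ‖x - z‖ + ‖y - z‖)) *
        (Real.pi - max (∠ z x y) (∠ z y x)) ≤
      ‖(‖x - z‖⁻¹ • (x - z)) - (‖y - z‖⁻¹ • (y - z))‖ ∧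
    ‖(‖x - z‖⁻¹ • (x - z)) - (‖y - z‖⁻¹ • (y - z))‖ ≤
      4 * ‖x - y‖ / (‖x - y‖ + ‖x - z‖ + ‖y - z‖) *
        (Real.pi - max (∠ z x y) (∠ z y x)) := by
  have hp : x - z ≠ 0 := sub_ne_zero.mpr hxz
  have hq : y - z ≠ 0 := sub_ne_zero.mpr hyz
  have hb : (0:ℝ) < ‖x - z‖ := norm_pos_iff.mpr hp
  have ha : (0:ℝ) < ‖y - z‖ := norm_pos_iff.mpr hq
  have hc : (0:ℝ) < ‖x - y‖ := norm_pos_iff.mpr (sub_ne_zero.mpr hxy)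
  have hl : (0:ℝ) < ‖x - y‖ + ‖x - z‖ + ‖y - z‖ := by linarith
  have hG0 : 0 ≤ InnerProductGeometry.angle (x - z) (y - z) :=
    InnerProductGeometry.angle_nonneg _ _
  have hGpi : InnerProductGeometry.angle (x - z) (y - z) ≤ π :=
    InnerProductGeometry.angle_le_pi _ _
  have hnorm : ‖(‖x - z‖⁻¹ • (x - z)) - (‖y - z‖⁻¹ • (y - z))‖ =
      2 * Real.sin (InnerProductGeometry.angle (x - z) (y - z) / 2) := unitdiff hp hq
  have hαdef : ∠ z x y = InnerProductGeometry.angle (-(x - z)) ((y - z) - (x - z)) := by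
    have h1 : ∠ z x y = InnerProductGeometry.angle (z - x) (y - x) := rfl
    rw [h1, show z - x = -(x - z) by abel, show y - x = (y - z) - (x - z) by abel]
  have hβdef : ∠ z y x = InnerProductGeometry.angle (-(y - z)) ((x - z) - (y - z)) := by
    have h1 : ∠ z y x = InnerProductGeometry.angle (z - y) (x - y) := rfl
    rw [h1, show z - y = -(y - z) by abel, show x - y = (x - z) - (y - z) by abel]
  have hA0 : 0 ≤ ∠ z x y := EuclideanGeometry.angle_nonneg _ _ _
  have hB0 : 0 ≤ ∠ z y x := EuclideanGeometry.angle_nonneg _ _ _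
  have hApi : ∠ z x y ≤ π := EuclideanGeometry.angle_le_pi _ _ _
  have hBpi : ∠ z y x ≤ π := EuclideanGeometry.angle_le_pi _ _ _
  have hsum : ∠ z x y + ∠ z y x + InnerProductGeometry.angle (x - z) (y - z) = π := by
    have h := EuclideanGeometry.angle_add_angle_add_angle_eq_pi (p₁ := z) (p₂ := x) y hxz
    rw [EuclideanGeometry.angle_comm x y z] at h
    have h2 : ∠ y z x = InnerProductGeometry.angle (x - z) (y - z) := by
      rw [EuclideanGeometry.angle_comm y z x]
      rfl
    rw [h2] at h
    linarith
  have hsa : Real.sin (∠ z x y) * ‖x - y‖ =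
      Real.sin (InnerProductGeometry.angle (x - z) (y - z)) * ‖y - z‖ := by
    have h := lawsin (x - z) (y - z)
    rw [← hαdef, show ‖(y - z) - (x - z)‖ = ‖x - y‖ by
      rw [show (y - z) - (x - z) = -(x - y) by abel, norm_neg]] at h
    have h2 : ‖x - z‖ * (Real.sin (∠ z x y) * ‖x - y‖) =
        ‖x - z‖ * (Real.sin (InnerProductGeometry.angle (x - z) (y - z)) * ‖y - z‖) := by
      linear_combination h
    exact mul_left_cancel₀ hb.ne' h2
  have hsb : Real.sin (∠ z y x) * ‖x - y‖ =
      Real.sin (InnerProductGeometry.angle (x - z) (y - z)) * ‖x - z‖ := by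
    have h := lawsin (y - z) (x - z)
    rw [← hβdef, InnerProductGeometry.angle_comm (y - z) (x - z),
      show ‖(x - z) - (y - z)‖ = ‖x - y‖ by rw [show (x - z) - (y - z) = x - y by abel]] at h
    have h2 : ‖y - z‖ * (Real.sin (∠ z y x) * ‖x - y‖) =
        ‖y - z‖ * (Real.sin (InnerProductGeometry.angle (x - z) (y - z)) * ‖x - z‖) := by
      linear_combination h
    exact mul_left_cancel₀ ha.ne' h2
  by_cases hGz : InnerProductGeometry.angle (x - z) (y - z) = 0
  · -- degenerate: angle at z is zero
    have hn0 : ‖(‖x - z‖⁻¹ • (x - z)) - (‖y - z‖⁻¹ • (y - z))‖ = 0 := by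
      rw [hnorm, hGz]; norm_num
    have hmax : max (∠ z x y) (∠ z y x) = π := by
      obtain ⟨-, r, hr, hqr⟩ := InnerProductGeometry.angle_eq_zero_iff.mp hGz
      have hr1 : r ≠ 1 := by
        rintro rfl
        rw [one_smul] at hqr
        exact hxy (sub_left_inj.mp hqr).symm
      rcases lt_or_gt_of_ne hr1 with hlt | hgt
      · have hB : ∠ z y x = π := by
          rw [hβdef, hqr, show (x - z) - r • (x - z) = (1 - r) • (x - z) by
              rw [sub_smul, one_smul],
            show -(r • (x - z)) = r • (-(x - z)) by rw [smul_neg],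
            InnerProductGeometry.angle_smul_left_of_pos _ _ hr,
            InnerProductGeometry.angle_smul_right_of_pos _ _ (by linarith : (0:ℝ) < 1 - r),
            InnerProductGeometry.angle_neg_left, InnerProductGeometry.angle_self hp, sub_zero]
        rw [hB, max_eq_right hApi]
      · have hA : ∠ z x y = π := by
          rw [hαdef, hqr, show r • (x - z) - (x - z) = (r - 1) • (x - z) by
              rw [sub_smul, one_smul],
            InnerProductGeometry.angle_smul_right_of_pos _ _ (by linarith : (0:ℝ) < r - 1),
            InnerProductGeometry.angle_neg_left, InnerProductGeometry.angle_self hp, sub_zero]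
        rw [hA, max_eq_left hBpi]
    rw [hn0, hmax, sub_self]
    norm_num
  by_cases hGp : InnerProductGeometry.angle (x - z) (y - z) = π
  · -- degenerate: angle at z is π
    have hn2 : ‖(‖x - z‖⁻¹ • (x - z)) - (‖y - z‖⁻¹ • (y - z))‖ = 2 := by
      rw [hnorm, hGp]
      norm_num [Real.sin_pi_div_two]
    rw [hGp] at hsum
    have hA : ∠ z x y = 0 := by linarith
    have hB : ∠ z y x = 0 := by linarith
    obtain ⟨-, r, hr, hqr⟩ := InnerProductGeometry.angle_eq_pi_iff.mp hGp
    have hceq : ‖x - y‖ = ‖x - z‖ + ‖y - z‖ := by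
      have h1 : x - y = (1 - r) • (x - z) := by
        rw [show x - y = (x - z) - (y - z) by abel, hqr, sub_smul, one_smul]
      have h2 : ‖y - z‖ = -r * ‖x - z‖ := by
        rw [hqr, norm_smul, Real.norm_eq_abs, abs_of_neg hr]
      rw [h1, norm_smul, Real.norm_eq_abs, abs_of_pos (by linarith : (0:ℝ) < 1 - r), h2]
      ring
    rw [hn2, hA, hB, max_self, sub_zero, hceq]
    constructor
    · rw [div_mul_eq_mul_div, div_le_iff₀ (by positivity)]
      nlinarith [Real.pi_pos]
    · rw [div_mul_eq_mul_div, le_div_iff₀ (by linarith)]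
      nlinarith [Real.pi_gt_three]
  · -- main case
    have hsG : 0 < Real.sin (InnerProductGeometry.angle (x - z) (y - z)) :=
      Real.sin_pos_of_pos_of_lt_pi (hG0.lt_of_ne (Ne.symm hGz)) (hGpi.lt_of_ne hGp)
    obtain ⟨k1, k2⟩ := core (∠ z x y) (∠ z y x) (InnerProductGeometry.angle (x - z) (y - z))
      ‖x - y‖ ‖y - z‖ ‖x - z‖ hA0 hB0 hG0 hsum hc hsa hsb hsG
    constructor
    · rw [hnorm, div_mul_eq_mul_div, div_le_iff₀ (mul_pos Real.pi_pos hl)]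
      linarith
    · rw [hnorm, div_mul_eq_mul_div, le_div_iff₀ hl]
      linarith
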